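/- Let K and n be positive integers, β ∈ ℝ^K, and for each k let Δ_k : {0,…,n} → ℝ³ be a sequence satisfying ‖Δ_k(t+1) − Δ_k(t)‖ ≤ ε for all k and all 0 ≤ t < n, where ε ≥ 0. Define f(t) = Σ_{k=1}^K β_k Δ_k(t) and d(t) = ‖f(t)‖. Then the empirical variance of d over {0,…,n} satisfies Var_{t∈{0,…,n}}(d(t)) ≤ (n · ε · Σ_{k=1}^K |β_k|)² / 4. -/

import Mathlib

open Finset

/-- Quantitative content of Lemma 1: if each basis displacement `Δ k` changes by
at most `ε` per time step, then the empirical variance of the pairwise distance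
`d t = ‖∑ k, β k • Δ k t‖` over `{0,…,n}` is at most `(n · ε · ∑ k |β k|)² / 4`. -/
theorem variance_of_distance_le
    (K n : ℕ) (hK : 0 < K) (hn : 0 < n) (β : Fin K → ℝ)
    (Δ : Fin K → ℕ → EuclideanSpace ℝ (Fin 3))
    (ε : ℝ) (hε : 0 ≤ ε)
    (hstep : ∀ k : Fin K, ∀ t < n, ‖Δ k (t + 1) - Δ k t‖ ≤ ε)
    (f : ℕ → EuclideanSpace ℝ (Fin 3))
    (hf : ∀ t, f t = ∑ k : Fin K, β k • Δ k t)
    (d : ℕ → ℝ) (hd : ∀ t, d t = ‖f t‖) :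
    (1 / (n + 1 : ℝ)) *
        ∑ t ∈ range (n + 1),
          (d t - (1 / (n + 1 : ℝ)) * ∑ s ∈ range (n + 1), d s) ^ 2
      ≤ (n * ε * ∑ k : Fin K, |β k|) ^ 2 / 4 := by
  set B : ℝ := ∑ k : Fin K, |β k| with hB
  have hBnn : 0 ≤ B := Finset.sum_nonneg fun k _ => abs_nonneg _
  set E : ℝ := ε * B with hE
  have hEnn : 0 ≤ E := mul_nonneg hε hBnn
  -- per-step bound on d
  have hdstep : ∀ t < n, |d (t + 1) - d t| ≤ E := by
    intro t ht
    have h1 : |d (t + 1) - d t| ≤ ‖f (t + 1) - f t‖ := by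
      rw [hd, hd]; exact abs_norm_sub_norm_le _ _
    have h2 : f (t + 1) - f t = ∑ k : Fin K, β k • (Δ k (t + 1) - Δ k t) := by
      rw [hf, hf, ← Finset.sum_sub_distrib]
      exact Finset.sum_congr rfl fun k _ => (smul_sub _ _ _).symm
    have h3 : ‖f (t + 1) - f t‖ ≤ ∑ k : Fin K, |β k| * ε := by
      rw [h2]
      refine (norm_sum_le _ _).trans (Finset.sum_le_sum fun k _ => ?_)
      rw [norm_smul, Real.norm_eq_abs]
      exact mul_le_mul_of_nonneg_left (hstep k t ht) (abs_nonneg _)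
    have h4 : ∑ k : Fin K, |β k| * ε = E := by
      rw [hE, ← Finset.sum_mul, mul_comm]
    exact h1.trans (h3.trans_eq h4)
  -- diameter bound
  have hjump : ∀ m : ℕ, ∀ s : ℕ, s + m ≤ n → |d (s + m) - d s| ≤ m * E := by
    intro m
    induction m with
    | zero => intro s _; simp
    | succ m ih =>
      intro s hsm
      have h1 : |d (s + m) - d s| ≤ m * E := ih s (by omega)
      have h2 : |d (s + m + 1) - d (s + m)| ≤ E := hdstep (s + m) (by omega)
      have : |d (s + (m + 1)) - d s| ≤ |d (s + m + 1) - d (s + m)| + |d (s + m) - d s| := by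
        have : s + (m + 1) = s + m + 1 := by omega
        rw [this]
        calc |d (s + m + 1) - d s|
            = |(d (s + m + 1) - d (s + m)) + (d (s + m) - d s)| := by ring_nf
          _ ≤ _ := abs_add_le _ _
      refine this.trans ?_
      push_cast
      nlinarith
  have hdiam : ∀ s ≤ n, ∀ t ≤ n, |d s - d t| ≤ n * E := by
    intro s hs t ht
    rcases le_total t s with h | h
    · have := hjump (s - t) t (by omega)
      have hst : t + (s - t) = s := by omega
      rw [hst] at this
      refine this.trans ?_
      have : ((s - t : ℕ) : ℝ) ≤ (n : ℝ) := by exact_mod_cast by omega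
      nlinarith
    · have := hjump (t - s) s (by omega)
      have hst : s + (t - s) = t := by omega
      rw [hst] at this
      rw [abs_sub_comm]
      refine this.trans ?_
      have : ((t - s : ℕ) : ℝ) ≤ (n : ℝ) := by exact_mod_cast by omega
      nlinarith
  -- midpoint
  set N : ℝ := (n : ℝ) + 1 with hN
  have hNpos : 0 < N := by positivity
  set μ : ℝ := (1 / N) * ∑ s ∈ range (n + 1), d s with hμ
  set lo : ℝ := d 0 with hlo
  -- midpoint of min and max
  have hne : (range (n + 1)).Nonempty := nonempty_range_add_one
  set a := ((range (n + 1)).image d).min' (hne.image d) with ha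
  set b := ((range (n + 1)).image d).max' (hne.image d) with hb
  obtain ⟨ta, hta, haa⟩ := Finset.mem_image.mp (((range (n + 1)).image d).min'_mem (hne.image d))
  obtain ⟨tb, htb, hbb⟩ := Finset.mem_image.mp (((range (n + 1)).image d).max'_mem (hne.image d))
  have hab : b - a ≤ n * E := by
    rw [ha, hb, ← haa, ← hbb]
    have := hdiam tb (by simpa using Nat.lt_succ_iff.mp (mem_range.mp htb)) ta
      (by simpa using Nat.lt_succ_iff.mp (mem_range.mp hta))
    exact (le_abs_self _).trans this
  set c : ℝ := (a + b) / 2 with hc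
  have hpt : ∀ t ∈ range (n + 1), (d t - c) ^ 2 ≤ (n * E) ^ 2 / 4 := by
    intro t ht
    have h1 : a ≤ d t := Finset.min'_le _ _ (Finset.mem_image_of_mem d ht)
    have h2 : d t ≤ b := Finset.le_max' _ _ (Finset.mem_image_of_mem d ht)
    have h3 : |d t - c| ≤ (b - a) / 2 := by
      rw [abs_le]; constructor <;> [skip; skip] <;> simp only [hc] <;> linarith
    have h4 : |d t - c| ≤ n * E / 2 := h3.trans (by linarith)
    calc (d t - c) ^ 2 = |d t - c| ^ 2 := (sq_abs _).symm
      _ ≤ (n * E / 2) ^ 2 := by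
          exact pow_le_pow_left₀ (abs_nonneg _) h4 2
      _ = (n * E) ^ 2 / 4 := by ring
  -- mean minimizes sum of squares
  have hsum : ∑ s ∈ range (n + 1), d s = N * μ := by
    rw [hμ]; field_simp
  have hkey : ∑ t ∈ range (n + 1), (d t - μ) ^ 2 ≤ ∑ t ∈ range (n + 1), (d t - c) ^ 2 := by
    have expand : ∀ t, (d t - c) ^ 2 = (d t - μ) ^ 2 + (μ - c) ^ 2 + 2 * (μ - c) * (d t - μ) := by
      intro t; ring
    have hz : ∑ t ∈ range (n + 1), (d t - μ) = 0 := by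
      rw [Finset.sum_sub_distrib, Finset.sum_const, Finset.card_range, hsum, nsmul_eq_mul, hN]
      push_cast
      ring
    have : ∑ t ∈ range (n + 1), (d t - c) ^ 2
        = (∑ t ∈ range (n + 1), (d t - μ) ^ 2) + N * (μ - c) ^ 2 := by
      simp only [expand, Finset.sum_add_distrib, ← Finset.mul_sum, hz, mul_zero,
        Finset.sum_const, Finset.card_range, nsmul_eq_mul, hN]
      push_cast
      ring
    rw [this]
    nlinarith [sq_nonneg (μ - c)]
  have hsum2 : ∑ t ∈ range (n + 1), (d t - c) ^ 2 ≤ N * ((n * E) ^ 2 / 4) := by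
    calc ∑ t ∈ range (n + 1), (d t - c) ^ 2
        ≤ ∑ _t ∈ range (n + 1), (n * E) ^ 2 / 4 := Finset.sum_le_sum hpt
      _ = N * ((n * E) ^ 2 / 4) := by
          rw [Finset.sum_const, Finset.card_range, nsmul_eq_mul]; push_cast [hN]; ring
  have hfinal : (1 / N) * ∑ t ∈ range (n + 1), (d t - μ) ^ 2 ≤ (n * E) ^ 2 / 4 := by
    rw [div_mul_eq_mul_div, one_mul, div_le_iff₀ hNpos]
    calc ∑ t ∈ range (n + 1), (d t - μ) ^ 2 ≤ N * ((n * E) ^ 2 / 4) :=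
          hkey.trans hsum2
      _ = (n * E) ^ 2 / 4 * N := by ring
  have : (n : ℝ) * ε * B = n * E := by rw [hE]; ring
  rw [this]
  exact hfinal
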